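/- Let X be a metrizable compact Hausdorff space containing more than one point, and let d be any metric on OH(OH(X)) inducing its topology. Then μ_OH X satisfies the disjoint approximation condition: for every ε > 0 there exist continuous maps g₁, g₂ : OH(OH(X)) → OH(OH(X)) such that g₁(OH(OH(X))) ∩ g₂(OH(OH(X))) = ∅, d(g_i(Λ), Λ) < ε for every Λ ∈ OH(OH(X)) and i = 1,2, and μ_OH X ∘ g_i = μ_OH X for i = 1,2. -/

import Mathlib

/-- The set of normed, weakly additive, order-preserving, positively homogeneous
functionals on `C(X, ℝ)`. -/
def OHF (X : Type*) [TopologicalSpace X] : Set (C(X, ℝ) → ℝ) :=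
  {ν | ν 1 = 1 ∧ (∀ (φ : C(X, ℝ)) (c : ℝ), ν (φ + ContinuousMap.const X c) = ν φ + c) ∧
    (∀ φ ψ : C(X, ℝ), φ ≤ ψ → ν φ ≤ ν ψ) ∧
    ∀ (φ : C(X, ℝ)) (t : ℝ), 0 ≤ t → ν (t • φ) = t * ν φ}

/-- For `φ ∈ C(X, ℝ)`, the evaluation map `π_φ : OH(X) → ℝ`. -/
def piOH (X : Type*) [TopologicalSpace X] (φ : C(X, ℝ)) : C(↥(OHF X), ℝ) :=
  ⟨fun ν => ν.1 φ, (continuous_apply φ).comp continuous_subtype_val⟩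

/-- The monad multiplication `μ_OH X : OH(OH(X)) → OH(X)`, `μ_OH X (M) (φ) = M (π_φ)`. -/
def muOH (X : Type*) [TopologicalSpace X] (M : ↥(OHF (↥(OHF X)))) : ↥(OHF X) := by
  refine ⟨fun φ => M.1 (piOH X φ), ?_, ?_, ?_, ?_⟩
  · have h1 : piOH X (1 : C(X, ℝ)) = 1 := by
      ext ν; exact ν.2.1
    show M.1 (piOH X 1) = 1
    rw [h1]; exact M.2.1
  · intro φ c
    have h : piOH X (φ + ContinuousMap.const X c)
        = piOH X φ + ContinuousMap.const _ c := by
      ext ν; exact ν.2.2.1 φ c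
    show M.1 (piOH X (φ + ContinuousMap.const X c)) = M.1 (piOH X φ) + c
    rw [h]; exact M.2.2.1 _ c
  · intro φ ψ h
    exact M.2.2.2.1 _ _ (fun ν => ν.2.2.2.1 φ ψ h)
  · intro φ t ht
    have h : piOH X (t • φ) = t • piOH X φ := by
      ext ν; exact ν.2.2.2.2 φ t ht
    show M.1 (piOH X (t • φ)) = t * M.1 (piOH X φ)
    rw [h]; exact M.2.2.2.2 _ t ht

open Set Filter Topology

section Aux

variable {Z : Type*} [TopologicalSpace Z]

lemma ohf_zero {ν : C(Z, ℝ) → ℝ} (hν : ν ∈ OHF Z) : ν 0 = 0 := by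
  have := hν.2.2.2 0 0 le_rfl
  simpa using this

lemma ohf_const {ν : C(Z, ℝ) → ℝ} (hν : ν ∈ OHF Z) (c : ℝ) :
    ν (ContinuousMap.const Z c) = c := by
  have := hν.2.1 0 c
  simpa [ohf_zero hν] using this

variable [CompactSpace Z] [Nonempty Z]

lemma ohf_bddAbove_range (Φ : C(Z, ℝ)) : BddAbove (Set.range ⇑Φ) :=
  (isCompact_range Φ.continuous).bddAbove

lemma ohf_bddBelow_range (Φ : C(Z, ℝ)) : BddBelow (Set.range ⇑Φ) :=
  (isCompact_range Φ.continuous).bddBelow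

lemma ohf_le_sSup {ν : C(Z, ℝ) → ℝ} (hν : ν ∈ OHF Z) (Φ : C(Z, ℝ)) :
    ν Φ ≤ sSup (Set.range ⇑Φ) := by
  have hle : Φ ≤ ContinuousMap.const Z (sSup (Set.range ⇑Φ)) := by
    intro z
    exact le_csSup (ohf_bddAbove_range Φ) ⟨z, rfl⟩
  calc ν Φ ≤ ν (ContinuousMap.const Z (sSup (Set.range ⇑Φ))) := hν.2.2.1 _ _ hle
    _ = _ := ohf_const hν _

lemma ohf_sInf_le {ν : C(Z, ℝ) → ℝ} (hν : ν ∈ OHF Z) (Φ : C(Z, ℝ)) :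
    sInf (Set.range ⇑Φ) ≤ ν Φ := by
  have hle : ContinuousMap.const Z (sInf (Set.range ⇑Φ)) ≤ Φ := by
    intro z
    exact csInf_le (ohf_bddBelow_range Φ) ⟨z, rfl⟩
  calc sInf (Set.range ⇑Φ) = ν (ContinuousMap.const Z (sInf (Set.range ⇑Φ))) :=
        (ohf_const hν _).symm
    _ ≤ ν Φ := hν.2.2.1 _ _ hle

lemma ohf_exists_min (Φ : C(Z, ℝ)) : ∃ z : Z, (∀ w, Φ z ≤ Φ w) ∧ Φ z = sInf (Set.range ⇑Φ) := by
  obtain ⟨z, -, hz⟩ := isCompact_univ.exists_isMinOn univ_nonempty Φ.continuous.continuousOn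
  refine ⟨z, fun w => hz (mem_univ w), ?_⟩
  refine le_antisymm (le_csInf (range_nonempty _) ?_) (csInf_le (ohf_bddBelow_range Φ) ⟨z, rfl⟩)
  rintro b ⟨w, rfl⟩
  exact hz (mem_univ w)

lemma ohf_exists_max (Φ : C(Z, ℝ)) : ∃ z : Z, (∀ w, Φ w ≤ Φ z) ∧ Φ z = sSup (Set.range ⇑Φ) := by
  obtain ⟨z, -, hz⟩ := isCompact_univ.exists_isMaxOn univ_nonempty Φ.continuous.continuousOn
  refine ⟨z, fun w => hz (mem_univ w), ?_⟩
  refine le_antisymm (le_csSup (ohf_bddAbove_range Φ) ⟨z, rfl⟩) (csSup_le (range_nonempty _) ?_)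
  rintro b ⟨w, rfl⟩
  exact hz (mem_univ w)

/-- The minimum functional. -/
lemma nuInf_mem : (fun Φ : C(Z, ℝ) => sInf (Set.range ⇑Φ)) ∈ OHF Z := by
  refine ⟨?_, ?_, ?_, ?_⟩
  · show sInf (Set.range ⇑(1 : C(Z, ℝ))) = 1
    have : Set.range ⇑(1 : C(Z, ℝ)) = {(1 : ℝ)} := by
      ext x; simp [ContinuousMap.one_apply]
    rw [this, csInf_singleton]
  · intro Φ c
    obtain ⟨z, hz, hz'⟩ := ohf_exists_min Φ
    have h1 : IsLeast (Set.range ⇑(Φ + ContinuousMap.const Z c)) (Φ z + c) := by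
      constructor
      · exact ⟨z, by simp⟩
      · rintro b ⟨w, rfl⟩
        simpa using add_le_add_right (hz w) c
    show sInf _ = _
    rw [h1.csInf_eq, hz']
  · intro Φ Ψ h
    refine le_csInf (range_nonempty _) ?_
    rintro b ⟨w, rfl⟩
    exact le_trans (csInf_le (ohf_bddBelow_range Φ) ⟨w, rfl⟩) (h w)
  · intro Φ t ht
    obtain ⟨z, hz, hz'⟩ := ohf_exists_min Φ
    have h1 : IsLeast (Set.range ⇑(t • Φ)) (t * Φ z) := by
      constructor
      · exact ⟨z, by simp⟩
      · rintro b ⟨w, rfl⟩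
        simpa using mul_le_mul_of_nonneg_left (hz w) ht
    show sInf _ = _
    rw [h1.csInf_eq, hz']

lemma nuSup_mem : (fun Φ : C(Z, ℝ) => sSup (Set.range ⇑Φ)) ∈ OHF Z := by
  refine ⟨?_, ?_, ?_, ?_⟩
  · show sSup (Set.range ⇑(1 : C(Z, ℝ))) = 1
    have : Set.range ⇑(1 : C(Z, ℝ)) = {(1 : ℝ)} := by
      ext x; simp [ContinuousMap.one_apply]
    rw [this, csSup_singleton]
  · intro Φ c
    obtain ⟨z, hz, hz'⟩ := ohf_exists_max Φ
    have h1 : IsGreatest (Set.range ⇑(Φ + ContinuousMap.const Z c)) (Φ z + c) := by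
      constructor
      · exact ⟨z, by simp⟩
      · rintro b ⟨w, rfl⟩
        simpa using add_le_add_right (hz w) c
    show sSup _ = _
    rw [h1.csSup_eq, hz']
  · intro Φ Ψ h
    refine csSup_le (range_nonempty _) ?_
    rintro b ⟨w, rfl⟩
    exact le_trans (h w) (le_csSup (ohf_bddAbove_range Ψ) ⟨w, rfl⟩)
  · intro Φ t ht
    obtain ⟨z, hz, hz'⟩ := ohf_exists_max Φ
    have h1 : IsGreatest (Set.range ⇑(t • Φ)) (t * Φ z) := by
      constructor
      · exact ⟨z, by simp⟩
      · rintro b ⟨w, rfl⟩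
        simpa using mul_le_mul_of_nonneg_left (hz w) ht
    show sSup _ = _
    rw [h1.csSup_eq, hz']

end Aux
section Aux2

variable (Z : Type*) [TopologicalSpace Z]

lemma ohf_isClosed : IsClosed (OHF Z) := by
  have hEq : OHF Z =
      {ν : C(Z, ℝ) → ℝ | ν 1 = 1} ∩
      ({ν | ∀ (φ : C(Z, ℝ)) (c : ℝ), ν (φ + ContinuousMap.const Z c) = ν φ + c} ∩
      ({ν | ∀ φ ψ : C(Z, ℝ), φ ≤ ψ → ν φ ≤ ν ψ} ∩
       {ν | ∀ (φ : C(Z, ℝ)) (t : ℝ), 0 ≤ t → ν (t • φ) = t * ν φ})) := by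
    ext ν
    simp only [OHF, Set.mem_setOf_eq, Set.mem_inter_iff]
  rw [hEq]
  refine IsClosed.inter (isClosed_eq (continuous_apply _) continuous_const) ?_
  refine IsClosed.inter ?_ (IsClosed.inter ?_ ?_)
  · have : {ν : C(Z, ℝ) → ℝ | ∀ (φ : C(Z, ℝ)) (c : ℝ),
        ν (φ + ContinuousMap.const Z c) = ν φ + c} =
        ⋂ (φ : C(Z, ℝ)), ⋂ (c : ℝ), {ν | ν (φ + ContinuousMap.const Z c) = ν φ + c} := by
      ext ν; simp
    rw [this]
    exact isClosed_iInter fun φ => isClosed_iInter fun c =>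
      isClosed_eq (continuous_apply _) ((continuous_apply φ).add continuous_const)
  · have : {ν : C(Z, ℝ) → ℝ | ∀ φ ψ : C(Z, ℝ), φ ≤ ψ → ν φ ≤ ν ψ} =
        ⋂ (φ : C(Z, ℝ)), ⋂ (ψ : C(Z, ℝ)), ⋂ (_ : φ ≤ ψ), {ν | ν φ ≤ ν ψ} := by
      ext ν; simp only [Set.mem_setOf_eq, Set.mem_iInter]
    rw [this]
    exact isClosed_iInter fun φ => isClosed_iInter fun ψ => isClosed_iInter fun _ =>
      isClosed_le (continuous_apply _) (continuous_apply _)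
  · have : {ν : C(Z, ℝ) → ℝ | ∀ (φ : C(Z, ℝ)) (t : ℝ), 0 ≤ t → ν (t • φ) = t * ν φ} =
        ⋂ (φ : C(Z, ℝ)), ⋂ (t : ℝ), ⋂ (_ : 0 ≤ t), {ν | ν (t • φ) = t * ν φ} := by
      ext ν; simp only [Set.mem_setOf_eq, Set.mem_iInter]
    rw [this]
    exact isClosed_iInter fun φ => isClosed_iInter fun t => isClosed_iInter fun _ =>
      isClosed_eq (continuous_apply _) (continuous_const.mul (continuous_apply _))

variable [CompactSpace Z] [Nonempty Z]

lemma ohf_isCompact : IsCompact (OHF Z) := by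
  have hbox : IsCompact (Set.pi Set.univ fun Φ : C(Z, ℝ) =>
      Set.Icc (sInf (Set.range ⇑Φ)) (sSup (Set.range ⇑Φ))) :=
    isCompact_univ_pi fun Φ : C(Z, ℝ) => isCompact_Icc
  refine hbox.of_isClosed_subset (ohf_isClosed Z) ?_
  intro ν hν
  rw [Set.mem_univ_pi]
  intro Φ
  exact ⟨ohf_sInf_le hν Φ, ohf_le_sSup hν Φ⟩

lemma ohf_compactSpace : CompactSpace ↥(OHF Z) :=
  isCompact_iff_compactSpace.mp (ohf_isCompact Z)

end Aux2
section Aux3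

variable {Z : Type*} [TopologicalSpace Z]

lemma ohf_convex {ν₁ ν₂ : C(Z, ℝ) → ℝ} (h₁ : ν₁ ∈ OHF Z) (h₂ : ν₂ ∈ OHF Z)
    {s : ℝ} (hs0 : 0 ≤ s) (hs1 : s ≤ 1) :
    (fun Φ => (1 - s) * ν₁ Φ + s * ν₂ Φ) ∈ OHF Z := by
  refine ⟨?_, ?_, ?_, ?_⟩
  · show (1 - s) * ν₁ 1 + s * ν₂ 1 = 1
    rw [h₁.1, h₂.1]; ring
  · intro Φ c
    show (1 - s) * ν₁ _ + s * ν₂ _ = (1 - s) * ν₁ Φ + s * ν₂ Φ + c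
    rw [h₁.2.1 Φ c, h₂.2.1 Φ c]; ring
  · intro Φ Ψ h
    have := h₁.2.2.1 Φ Ψ h
    have := h₂.2.2.1 Φ Ψ h
    have hs' : (0:ℝ) ≤ 1 - s := by linarith
    exact add_le_add (mul_le_mul_of_nonneg_left (h₁.2.2.1 Φ Ψ h) hs')
      (mul_le_mul_of_nonneg_left (h₂.2.2.1 Φ Ψ h) hs0)
  · intro Φ t ht
    show (1 - s) * ν₁ _ + s * ν₂ _ = t * ((1 - s) * ν₁ Φ + s * ν₂ Φ)
    rw [h₁.2.2.2 Φ t ht, h₂.2.2.2 Φ t ht]; ring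

/-- In the presence of two distinct elements of `OHF Z`, every nonempty open subset of
`↥(OHF Z)` contains a point outside any given finite set. -/
lemma ohf_open_avoid {ν₁ ν₂ : C(Z, ℝ) → ℝ} (h₁ : ν₁ ∈ OHF Z) (h₂ : ν₂ ∈ OHF Z)
    (hne : ν₁ ≠ ν₂) {U : Set ↥(OHF Z)} (hU : IsOpen U) (hUne : U.Nonempty)
    {A : Set ↥(OHF Z)} (hA : A.Finite) : ∃ y, y ∈ U ∧ y ∉ A := by
  obtain ⟨ν, hνU⟩ := hUne
  -- pick νo among ν₁, ν₂ different from ν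
  obtain ⟨νo, hνo, hνoν⟩ : ∃ νo, νo ∈ OHF Z ∧ νo ≠ ν.1 := by
    by_cases hc : ν.1 = ν₁
    · exact ⟨ν₂, h₂, fun h => hne ((h.trans hc).symm)⟩
    · exact ⟨ν₁, h₁, fun h => hc h.symm⟩
  obtain ⟨Φd, hΦd⟩ : ∃ Φd, νo Φd ≠ ν.1 Φd := by
    by_contra h
    push_neg at h
    exact hνoν (funext h)
  -- the segment from ν towards νo
  have hmem : ∀ u : Set.Icc (0:ℝ) 1,
      (fun Φ => (1 - u.1) * ν.1 Φ + u.1 * νo Φ) ∈ OHF Z := fun u =>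
    ohf_convex ν.2 hνo u.2.1 u.2.2
  set g : Set.Icc (0:ℝ) 1 → ↥(OHF Z) := fun u => ⟨_, hmem u⟩ with hg
  have hgc : Continuous g := by
    refine Continuous.subtype_mk ?_ _
    refine continuous_pi fun Φ => ?_
    exact ((continuous_const.sub continuous_subtype_val).mul continuous_const).add
      (continuous_subtype_val.mul continuous_const)
  have hginj : Function.Injective g := by
    intro u v huv
    have h0 := congrFun (congrArg Subtype.val huv) Φd
    simp only [hg] at h0
    have : (u.1 - v.1) * (νo Φd - ν.1 Φd) = 0 := by ring_nf; linarith [h0]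
    rcases mul_eq_zero.mp this with h | h
    · exact Subtype.ext (by linarith)
    · exact absurd (by linarith : νo Φd = ν.1 Φd) hΦd
  have hg0 : g ⟨0, le_rfl, zero_le_one⟩ = ν := by
    apply Subtype.ext
    funext Φ
    show (1 - 0) * ν.1 Φ + 0 * νo Φ = ν.1 Φ
    ring
  -- the preimage of U is a neighborhood of 0 in Icc 0 1
  have hS : g ⁻¹' U ∈ nhds (⟨0, le_rfl, zero_le_one⟩ : Set.Icc (0:ℝ) 1) :=
    (hU.preimage hgc).mem_nhds (by rw [Set.mem_preimage, hg0]; exact hνU)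
  -- a sequence in Icc tending to 0
  set seq : ℕ → Set.Icc (0:ℝ) 1 := fun n =>
    ⟨1 / (n + 1 : ℝ), by positivity, by
      rw [div_le_one (by positivity)]; linarith [Nat.cast_nonneg (α := ℝ) n]⟩ with hseq
  have hseqt : Filter.Tendsto seq Filter.atTop (nhds ⟨0, le_rfl, zero_le_one⟩) := by
    rw [tendsto_subtype_rng]
    exact tendsto_one_div_add_atTop_nhds_zero_nat
  have hev := hseqt.eventually_mem hS
  obtain ⟨N, hN⟩ := Filter.eventually_atTop.mp hev
  have hinj2 : Function.Injective fun n : ℕ => g (seq (N + n)) := by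
    intro a b hab
    have h0 := congrArg Subtype.val (hginj hab)
    simp only [hseq] at h0
    have hx : (0:ℝ) < ((N + a : ℕ) : ℝ) + 1 := by positivity
    have hy : (0:ℝ) < ((N + b : ℕ) : ℝ) + 1 := by positivity
    rw [div_eq_div_iff hx.ne' hy.ne'] at h0
    have h1 : ((N + a : ℕ) : ℝ) = ((N + b : ℕ) : ℝ) := by linarith
    have h2 : N + a = N + b := Nat.cast_injective h1
    omega
  have hUinf : U.Infinite :=
    Set.infinite_of_injective_forall_mem hinj2 fun n => hN (N + n) (Nat.le_add_right N n)
  obtain ⟨y, hy⟩ := (hUinf.diff hA).nonempty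
  exact ⟨y, hy.1, hy.2⟩

end Aux3
section Aux4

lemma entourage_of_metric {ι : Type*} {S : Set (ι → ℝ)} [CompactSpace ↥S]
    (m : MetricSpace ↥S)
    (hm : m.toUniformSpace.toTopologicalSpace = (inferInstance : TopologicalSpace ↥S))
    {ε : ℝ} (hε : 0 < ε) :
    ∃ (I : Finset ι) (δ : ℝ), 0 < δ ∧
      ∀ a b : ↥S, (∀ i ∈ I, |a.1 i - b.1 i| < δ) → m.dist a b < ε := by
  have hkey : m.toUniformSpace = (inferInstance : UniformSpace ↥S) :=
    unique_uniformity_of_compact hm rfl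
  have hball : {p : ↥S × ↥S | m.dist p.1 p.2 < ε} ∈ @uniformity ↥S m.toUniformSpace := by
    have := @Metric.dist_mem_uniformity ↥S m.toPseudoMetricSpace ε hε
    exact this
  rw [hkey] at hball
  rw [uniformity_setCoe] at hball
  obtain ⟨T, hT, hTsub⟩ := Filter.mem_comap.mp hball
  rw [Pi.uniformity] at hT
  obtain ⟨I, Ifin, V, hV, hUeq⟩ := Filter.mem_iInf.mp hT
  choose W hW hWsub using fun i : I => Filter.mem_comap.mp (hV i)
  choose δf hδf hδfsub using fun i : I => Metric.mem_uniformity_dist.mp (hW i)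
  haveI := Ifin.fintype
  obtain ⟨δ, hδpos, hδle⟩ : ∃ δ : ℝ, 0 < δ ∧ ∀ i : I, δ ≤ δf i := by
    rcases isEmpty_or_nonempty I with h | h
    · exact ⟨1, one_pos, fun i => (IsEmpty.false i).elim⟩
    · refine ⟨Finset.univ.inf' Finset.univ_nonempty δf, ?_,
        fun i => Finset.inf'_le _ (Finset.mem_univ i)⟩
      exact (Finset.lt_inf'_iff _).mpr fun i _ => hδf i
  refine ⟨Ifin.toFinset, δ, hδpos, ?_⟩
  intro a b hab
  have hmem : (a, b) ∈ {p : ↥S × ↥S | m.dist p.1 p.2 < ε} := by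
    apply hTsub
    show Prod.map _ _ (a, b) ∈ T
    rw [hUeq, Set.mem_iInter]
    intro i
    apply hWsub i
    show ((a.1 i.1), (b.1 i.1)) ∈ W i
    apply hδfsub i
    calc dist (a.1 i.1) (b.1 i.1) = |a.1 i.1 - b.1 i.1| := Real.dist_eq _ _
      _ < δ := hab i.1 (Ifin.mem_toFinset.mpr i.2)
      _ ≤ δf i := hδle i
  exact hmem

end Aux4

/-- For a metrizable compact Hausdorff space `X` with more than one point, and any metric
on `OH(OH(X))` inducing its topology, the map `μ_OH X` satisfies the disjoint approximation
condition. -/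
theorem muOH_disjoint_approximation (X : Type*) [TopologicalSpace X] [CompactSpace X]
    [T2Space X] [TopologicalSpace.MetrizableSpace X] [Nontrivial X]
    (m : MetricSpace ↥(OHF (↥(OHF X))))
    (hm : m.toUniformSpace.toTopologicalSpace
      = (inferInstance : TopologicalSpace ↥(OHF (↥(OHF X))))) :
    ∀ ε : ℝ, 0 < ε → ∃ g₁ g₂ : ↥(OHF (↥(OHF X))) → ↥(OHF (↥(OHF X))),
      Continuous g₁ ∧ Continuous g₂ ∧
      Set.range g₁ ∩ Set.range g₂ = ∅ ∧
      (∀ Λ : ↥(OHF (↥(OHF X))), m.dist (g₁ Λ) Λ < ε ∧ m.dist (g₂ Λ) Λ < ε) ∧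
      muOH X ∘ g₁ = muOH X ∧ muOH X ∘ g₂ = muOH X := by
  intro ε hε
  classical
  obtain ⟨x₁, x₂, hx12⟩ := exists_pair_ne X
  haveI : Nonempty X := ⟨x₁⟩
  haveI : CompactSpace ↥(OHF X) := ohf_compactSpace X
  haveI : Nonempty ↥(OHF X) := ⟨⟨_, (nuInf_mem : _ ∈ OHF X)⟩⟩
  haveI : CompactSpace ↥(OHF (↥(OHF X))) := ohf_compactSpace ↥(OHF X)
  -- the two extreme functionals on X
  set νmin : ↥(OHF X) := ⟨fun φ => sInf (Set.range ⇑φ), nuInf_mem⟩ with hνmin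
  set νmax : ↥(OHF X) := ⟨fun φ => sSup (Set.range ⇑φ), nuSup_mem⟩ with hνmax
  -- a function separating two points of X
  obtain ⟨φ₀, hφ₀0, hφ₀1, hφ₀I⟩ := exists_continuous_zero_one_of_isClosed
    (isClosed_singleton (x := x₁)) (isClosed_singleton (x := x₂))
    (Set.disjoint_singleton.mpr hx12)
  have hνne : νmin ≠ νmax := by
    intro h
    have h1 : sInf (Set.range ⇑φ₀) ≤ 0 := by
      have := csInf_le (ohf_bddBelow_range φ₀) (Set.mem_range_self x₁)
      rw [hφ₀0 (Set.mem_singleton x₁)] at this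
      simpa using this
    have h2 : (1:ℝ) ≤ sSup (Set.range ⇑φ₀) := by
      have := le_csSup (ohf_bddAbove_range φ₀) (Set.mem_range_self x₂)
      rw [hφ₀1 (Set.mem_singleton x₂)] at this
      simpa using this
    have h3 : sInf (Set.range ⇑φ₀) = sSup (Set.range ⇑φ₀) :=
      congrFun (congrArg Subtype.val h) φ₀
    linarith
  have hraw : (fun φ : C(X, ℝ) => sInf (Set.range ⇑φ)) ≠ (fun φ : C(X, ℝ) => sSup (Set.range ⇑φ)) :=
    fun h => hνne (Subtype.ext h)
  -- entourage data from the metric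
  obtain ⟨F, δ, hδpos, hF⟩ := entourage_of_metric m hm hε
  -- choose near-maximum points avoiding νmin
  have hqex : ∀ Φ : C(↥(OHF X), ℝ), ∃ y : ↥(OHF X),
      (sSup (Set.range ⇑Φ) - δ < Φ y) ∧ y ∉ ({νmin} : Set ↥(OHF X)) := by
    intro Φ
    have hUopen : IsOpen {y : ↥(OHF X) | sSup (Set.range ⇑Φ) - δ < Φ y} :=
      isOpen_lt continuous_const Φ.continuous
    have hUne : {y : ↥(OHF X) | sSup (Set.range ⇑Φ) - δ < Φ y}.Nonempty := by
      obtain ⟨z, hz, hz'⟩ := ohf_exists_max Φ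
      exact ⟨z, by rw [Set.mem_setOf_eq, hz']; linarith⟩
    obtain ⟨y, hy1, hy2⟩ := ohf_open_avoid nuInf_mem nuSup_mem hraw hUopen hUne
      (Set.finite_singleton νmin)
    exact ⟨y, hy1, hy2⟩
  choose q hq1 hq2 using hqex
  -- choose near-minimum points avoiding νmax and the chosen q's
  have hpex : ∀ Φ : C(↥(OHF X), ℝ), ∃ y : ↥(OHF X),
      (Φ y < sInf (Set.range ⇑Φ) + δ) ∧
        y ∉ (↑(insert νmax (F.image q)) : Set ↥(OHF X)) := by
    intro Φ
    have hUopen : IsOpen {y : ↥(OHF X) | Φ y < sInf (Set.range ⇑Φ) + δ} :=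
      isOpen_lt Φ.continuous continuous_const
    have hUne : {y : ↥(OHF X) | Φ y < sInf (Set.range ⇑Φ) + δ}.Nonempty := by
      obtain ⟨z, hz, hz'⟩ := ohf_exists_min Φ
      exact ⟨z, by rw [Set.mem_setOf_eq, hz']; linarith⟩
    obtain ⟨y, hy1, hy2⟩ := ohf_open_avoid nuInf_mem nuSup_mem hraw hUopen hUne
      (insert νmax (F.image q)).finite_toSet
    exact ⟨y, hy1, hy2⟩
  choose p hp1 hp2 using hpex
  -- the marked sets
  set Cs : Set ↥(OHF X) := insert νmin (↑(F.image p)) with hCs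
  set Ds : Set ↥(OHF X) := insert νmax (↑(F.image q)) with hDs
  have hCfin : Cs.Finite := Set.Finite.insert _ (F.image p).finite_toSet
  have hDfin : Ds.Finite := Set.Finite.insert _ (F.image q).finite_toSet
  have hdisj : Disjoint Ds Cs := by
    rw [Set.disjoint_left]
    intro a haD haC
    rcases Set.mem_insert_iff.mp haD with h | h
    · rcases Set.mem_insert_iff.mp haC with h' | h'
      · exact hνne (h'.symm.trans h)
      · obtain ⟨Φ, hΦF, hΦ⟩ := Finset.mem_image.mp (Finset.mem_coe.mp h')
        apply hp2 Φ
        rw [hΦ, h]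
        exact Finset.mem_coe.mpr (Finset.mem_insert_self _ _)
    · obtain ⟨Φ, hΦF, hΦ⟩ := Finset.mem_image.mp (Finset.mem_coe.mp h)
      rcases Set.mem_insert_iff.mp haC with h' | h'
      · exact hq2 Φ (by rw [hΦ, h']; exact Set.mem_singleton _)
      · obtain ⟨Ψ, hΨF, hΨ⟩ := Finset.mem_image.mp (Finset.mem_coe.mp h')
        apply hp2 Ψ
        rw [hΨ, ← hΦ]
        exact Finset.mem_coe.mpr (Finset.mem_insert_of_mem (Finset.mem_image_of_mem q hΦF))
  -- Urysohn function Φs : 0 on Ds, 1 on Cs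
  obtain ⟨Φs, hΦs0, hΦs1, hΦsI⟩ := exists_continuous_zero_one_of_isClosed
    hDfin.isClosed hCfin.isClosed hdisj
  have hmin1 : Φs νmin = 1 := by
    have := hΦs1 (Set.mem_insert νmin _)
    simpa using this
  have hmax0 : Φs νmax = 0 := by
    have := hΦs0 (Set.mem_insert νmax _)
    simpa using this
  have hp1' : ∀ Φ ∈ F, Φs (p Φ) = 1 := by
    intro Φ hΦ
    have hmem : p Φ ∈ Cs := Set.mem_insert_iff.mpr
      (Or.inr (Finset.mem_coe.mpr (Finset.mem_image_of_mem p hΦ)))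
    have := hΦs1 hmem
    simpa using this
  have hq0' : ∀ Φ ∈ F, Φs (q Φ) = 0 := by
    intro Φ hΦ
    have hmem : q Φ ∈ Ds := Set.mem_insert_iff.mpr
      (Or.inr (Finset.mem_coe.mpr (Finset.mem_image_of_mem q hΦ)))
    have := hΦs0 hmem
    simpa using this
  -- the lower and upper envelope functionals
  set SH : C(↥(OHF X), ℝ) → Set ℝ := fun Φ =>
    {x | ∃ t c : ℝ, 0 ≤ t ∧ (∀ y : ↥(OHF X), t * Φs y + c ≤ Φ y) ∧ x = t + c} with hSHdef
  set Hf : C(↥(OHF X), ℝ) → ℝ := fun Φ => sSup (SH Φ) with hHfdef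
  set SK : C(↥(OHF X), ℝ) → Set ℝ := fun Φ =>
    {x | ∃ t c : ℝ, 0 ≤ t ∧ (∀ y : ↥(OHF X), Φ y ≤ t * Φs y + c) ∧ x = c} with hSKdef
  set Kf : C(↥(OHF X), ℝ) → ℝ := fun Φ => sInf (SK Φ) with hKfdef
  have hSHne : ∀ Φ, (SH Φ).Nonempty := by
    intro Φ
    refine ⟨sInf (Set.range ⇑Φ), 0, sInf (Set.range ⇑Φ), le_rfl, fun y => ?_, by ring⟩
    simpa using csInf_le (ohf_bddBelow_range Φ) (Set.mem_range_self y)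
  have hSKne : ∀ Φ, (SK Φ).Nonempty := by
    intro Φ
    refine ⟨sSup (Set.range ⇑Φ), 0, sSup (Set.range ⇑Φ), le_rfl, fun y => ?_, rfl⟩
    simpa using le_csSup (ohf_bddAbove_range Φ) (Set.mem_range_self y)
  have hSHub : ∀ Φ (y : ↥(OHF X)), Φs y = 1 → ∀ x ∈ SH Φ, x ≤ Φ y := by
    rintro Φ y hy x ⟨t, c, ht, hc, rfl⟩
    have := hc y
    rw [hy] at this
    linarith
  have hSKlb : ∀ Φ (y : ↥(OHF X)), Φs y = 0 → ∀ x ∈ SK Φ, Φ y ≤ x := by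
    rintro Φ y hy x ⟨t, c, ht, hc, hx⟩
    have := hc y
    rw [hy] at this
    rw [hx]
    linarith
  have hSHbdd : ∀ Φ, BddAbove (SH Φ) := fun Φ =>
    ⟨Φ νmin, fun x hx => hSHub Φ νmin hmin1 x hx⟩
  have hSKbdd : ∀ Φ, BddBelow (SK Φ) := fun Φ =>
    ⟨Φ νmax, fun x hx => hSKlb Φ νmax hmax0 x hx⟩
  have hH_le : ∀ Φ (y : ↥(OHF X)), Φs y = 1 → Hf Φ ≤ Φ y := fun Φ y hy =>
    csSup_le (hSHne Φ) (hSHub Φ y hy)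
  have hK_ge : ∀ Φ (y : ↥(OHF X)), Φs y = 0 → Φ y ≤ Kf Φ := fun Φ y hy =>
    le_csInf (hSKne Φ) (hSKlb Φ y hy)
  have hH_mono : ∀ Φ Ψ : C(↥(OHF X), ℝ), Φ ≤ Ψ → Hf Φ ≤ Hf Ψ := by
    intro Φ Ψ hΦΨ
    refine csSup_le_csSup (hSHbdd Ψ) (hSHne Φ) ?_
    rintro x ⟨t, c, ht, hc, rfl⟩
    exact ⟨t, c, ht, fun y => (hc y).trans (hΦΨ y), rfl⟩
  have hK_mono : ∀ Φ Ψ : C(↥(OHF X), ℝ), Φ ≤ Ψ → Kf Φ ≤ Kf Ψ := by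
    intro Φ Ψ hΦΨ
    refine csInf_le_csInf (hSKbdd Φ) (hSKne Ψ) ?_
    rintro x ⟨t, c, ht, hc, hx⟩
    exact ⟨t, c, ht, fun y => (hΦΨ y).trans (hc y), hx⟩
  have hH_add : ∀ (Φ : C(↥(OHF X), ℝ)) (c₀ : ℝ),
      Hf (Φ + ContinuousMap.const _ c₀) = Hf Φ + c₀ := by
    intro Φ c₀
    apply le_antisymm
    · refine csSup_le (hSHne _) ?_
      rintro x ⟨t, c, ht, hc, rfl⟩
      have hmem : t + (c - c₀) ∈ SH Φ := by
        refine ⟨t, c - c₀, ht, fun y => ?_, rfl⟩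
        have := hc y
        simp only [ContinuousMap.add_apply, ContinuousMap.const_apply] at this
        linarith
      have := le_csSup (hSHbdd Φ) hmem
      linarith
    · have h1 : ∀ x ∈ SH Φ, x ≤ Hf (Φ + ContinuousMap.const _ c₀) - c₀ := by
        rintro x ⟨t, c, ht, hc, rfl⟩
        have hmem : t + (c + c₀) ∈ SH (Φ + ContinuousMap.const _ c₀) := by
          refine ⟨t, c + c₀, ht, fun y => ?_, rfl⟩
          simp only [ContinuousMap.add_apply, ContinuousMap.const_apply]
          linarith [hc y]
        have := le_csSup (hSHbdd _) hmem
        linarith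
      have := csSup_le (hSHne Φ) h1
      linarith
  have hK_add : ∀ (Φ : C(↥(OHF X), ℝ)) (c₀ : ℝ),
      Kf (Φ + ContinuousMap.const _ c₀) = Kf Φ + c₀ := by
    intro Φ c₀
    apply le_antisymm
    · have h1 : ∀ x ∈ SK Φ, Kf (Φ + ContinuousMap.const _ c₀) - c₀ ≤ x := by
        rintro x ⟨t, c, ht, hc, hx⟩
        have hmem : c + c₀ ∈ SK (Φ + ContinuousMap.const _ c₀) := by
          refine ⟨t, c + c₀, ht, fun y => ?_, rfl⟩
          simp only [ContinuousMap.add_apply, ContinuousMap.const_apply]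
          linarith [hc y]
        have := csInf_le (hSKbdd _) hmem
        rw [hx]
        linarith
      have := le_csInf (hSKne Φ) h1
      linarith
    · refine le_csInf (hSKne _) ?_
      rintro x ⟨t, c, ht, hc, hx⟩
      have hmem : c - c₀ ∈ SK Φ := by
        refine ⟨t, c - c₀, ht, fun y => ?_, rfl⟩
        have := hc y
        simp only [ContinuousMap.add_apply, ContinuousMap.const_apply] at this
        linarith
      have := csInf_le (hSKbdd Φ) hmem
      rw [hx]
      linarith
  have hH_zero : Hf (0 : C(↥(OHF X), ℝ)) = 0 := by
    apply le_antisymm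
    · refine csSup_le (hSHne 0) ?_
      rintro x ⟨t, c, ht, hc, rfl⟩
      have := hc νmin
      rw [hmin1] at this
      simpa using this
    · refine le_csSup (hSHbdd 0) ⟨0, 0, le_rfl, fun y => by simp, by ring⟩
  have hK_zero : Kf (0 : C(↥(OHF X), ℝ)) = 0 := by
    apply le_antisymm
    · refine csInf_le (hSKbdd 0) ⟨0, 0, le_rfl, fun y => by simp, rfl⟩
    · refine le_csInf (hSKne 0) ?_
      rintro x ⟨t, c, ht, hc, hx⟩
      have := hc νmax
      rw [hmax0] at this
      rw [hx]
      simpa using this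
  have hH_smul : ∀ (Φ : C(↥(OHF X), ℝ)) (t₀ : ℝ), 0 ≤ t₀ → Hf (t₀ • Φ) = t₀ * Hf Φ := by
    intro Φ t₀ ht₀
    rcases eq_or_lt_of_le ht₀ with h0 | hpos
    · rw [← h0, zero_smul, hH_zero, zero_mul]
    · apply le_antisymm
      · refine csSup_le (hSHne _) ?_
        rintro x ⟨t, c, ht, hc, rfl⟩
        have hmem : t / t₀ + c / t₀ ∈ SH Φ := by
          refine ⟨t / t₀, c / t₀, by positivity, fun y => ?_, rfl⟩
          have h1 := hc y
          simp only [ContinuousMap.smul_apply, smul_eq_mul] at h1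
          rw [div_mul_eq_mul_div, ← add_div, div_le_iff₀ hpos]
          linarith
        have hle := le_csSup (hSHbdd Φ) hmem
        have h2 : t + c = t₀ * (t / t₀ + c / t₀) := by field_simp
        rw [h2]
        exact mul_le_mul_of_nonneg_left hle (le_of_lt hpos)
      · rw [mul_comm, ← le_div_iff₀ hpos]
        refine csSup_le (hSHne Φ) ?_
        rintro x ⟨t, c, ht, hc, rfl⟩
        rw [le_div_iff₀ hpos]
        have hmem : t₀ * t + t₀ * c ∈ SH (t₀ • Φ) := by
          refine ⟨t₀ * t, t₀ * c, by positivity, fun y => ?_, rfl⟩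
          simp only [ContinuousMap.smul_apply, smul_eq_mul]
          have := hc y
          nlinarith
        have := le_csSup (hSHbdd _) hmem
        nlinarith
  have hK_smul : ∀ (Φ : C(↥(OHF X), ℝ)) (t₀ : ℝ), 0 ≤ t₀ → Kf (t₀ • Φ) = t₀ * Kf Φ := by
    intro Φ t₀ ht₀
    rcases eq_or_lt_of_le ht₀ with h0 | hpos
    · rw [← h0, zero_smul, hK_zero, zero_mul]
    · apply le_antisymm
      · rw [mul_comm, ← div_le_iff₀ hpos]
        refine le_csInf (hSKne Φ) ?_
        rintro x ⟨t, c, ht, hc, hx⟩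
        rw [hx, div_le_iff₀ hpos]
        have hmem : t₀ * c ∈ SK (t₀ • Φ) := by
          refine ⟨t₀ * t, t₀ * c, by positivity, fun y => ?_, rfl⟩
          simp only [ContinuousMap.smul_apply, smul_eq_mul]
          have := hc y
          nlinarith
        have := csInf_le (hSKbdd _) hmem
        nlinarith
      · refine le_csInf (hSKne _) ?_
        rintro x ⟨t, c, ht, hc, hx⟩
        rw [hx]
        have hmem : c / t₀ ∈ SK Φ := by
          refine ⟨t / t₀, c / t₀, by positivity, fun y => ?_, rfl⟩
          have h1 := hc y
          simp only [ContinuousMap.smul_apply, smul_eq_mul] at h1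
          rw [div_mul_eq_mul_div, ← add_div, le_div_iff₀ hpos]
          linarith
        have hle := csInf_le (hSKbdd Φ) hmem
        calc t₀ * Kf Φ ≤ t₀ * (c / t₀) := mul_le_mul_of_nonneg_left hle (le_of_lt hpos)
          _ = c := by field_simp
  -- the two maps
  have g1mem : ∀ M : ↥(OHF (↥(OHF X))),
      (fun Φ => max (M.1 Φ) (Hf Φ)) ∈ OHF ↥(OHF X) := by
    intro M
    refine ⟨?_, ?_, ?_, ?_⟩
    · show max (M.1 1) (Hf 1) = 1
      rw [M.2.1]
      apply max_eq_left
      have h1 := hH_le 1 νmin hmin1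
      simpa using h1
    · intro Φ c
      show max (M.1 _) (Hf _) = max (M.1 Φ) (Hf Φ) + c
      rw [M.2.2.1 Φ c, hH_add Φ c, max_add_add_right]
    · intro Φ Ψ h
      exact max_le_max (M.2.2.2.1 Φ Ψ h) (hH_mono Φ Ψ h)
    · intro Φ t ht
      show max (M.1 _) (Hf _) = t * max (M.1 Φ) (Hf Φ)
      rw [M.2.2.2.2 Φ t ht, hH_smul Φ t ht, mul_max_of_nonneg _ _ ht]
  have g2mem : ∀ M : ↥(OHF (↥(OHF X))),
      (fun Φ => min (M.1 Φ) (Kf Φ)) ∈ OHF ↥(OHF X) := by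
    intro M
    refine ⟨?_, ?_, ?_, ?_⟩
    · show min (M.1 1) (Kf 1) = 1
      rw [M.2.1]
      apply min_eq_left
      have h1 := hK_ge 1 νmax hmax0
      simpa using h1
    · intro Φ c
      show min (M.1 _) (Kf _) = min (M.1 Φ) (Kf Φ) + c
      rw [M.2.2.1 Φ c, hK_add Φ c, min_add_add_right]
    · intro Φ Ψ h
      exact min_le_min (M.2.2.2.1 Φ Ψ h) (hK_mono Φ Ψ h)
    · intro Φ t ht
      show min (M.1 _) (Kf _) = t * min (M.1 Φ) (Kf Φ)
      rw [M.2.2.2.2 Φ t ht, hK_smul Φ t ht, mul_min_of_nonneg _ _ ht]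
  set g₁ : ↥(OHF (↥(OHF X))) → ↥(OHF (↥(OHF X))) := fun M => ⟨_, g1mem M⟩ with hg₁
  set g₂ : ↥(OHF (↥(OHF X))) → ↥(OHF (↥(OHF X))) := fun M => ⟨_, g2mem M⟩ with hg₂
  have hg₁c : Continuous g₁ := by
    refine Continuous.subtype_mk ?_ _
    exact continuous_pi fun Φ =>
      (((continuous_apply Φ).comp continuous_subtype_val).max continuous_const)
  have hg₂c : Continuous g₂ := by
    refine Continuous.subtype_mk ?_ _
    exact continuous_pi fun Φ =>
      (((continuous_apply Φ).comp continuous_subtype_val).min continuous_const)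
  -- disjointness of ranges
  have hrange : Set.range g₁ ∩ Set.range g₂ = ∅ := by
    rw [Set.eq_empty_iff_forall_notMem]
    rintro N ⟨⟨M₁, hM₁⟩, ⟨M₂, hM₂⟩⟩
    have h1 : (1:ℝ) ≤ N.1 Φs := by
      rw [← hM₁]
      show (1:ℝ) ≤ max (M₁.1 Φs) (Hf Φs)
      have hmem : (1:ℝ) ∈ SH Φs := ⟨1, 0, zero_le_one, fun y => by simp, by ring⟩
      exact le_trans (le_csSup (hSHbdd Φs) hmem) (le_max_right _ _)
    have h2 : N.1 Φs ≤ 0 := by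
      rw [← hM₂]
      show min (M₂.1 Φs) (Kf Φs) ≤ 0
      have hmem : (0:ℝ) ∈ SK Φs := ⟨1, 0, zero_le_one, fun y => by simp, rfl⟩
      exact le_trans (min_le_right _ _) (csInf_le (hSKbdd Φs) hmem)
    linarith
  -- closeness
  have hclose : ∀ Λ : ↥(OHF (↥(OHF X))), m.dist (g₁ Λ) Λ < ε ∧ m.dist (g₂ Λ) Λ < ε := by
    intro Λ
    constructor
    · apply hF
      intro Φ hΦF
      show |max (Λ.1 Φ) (Hf Φ) - Λ.1 Φ| < δ
      have hH_le_p : Hf Φ ≤ Φ (p Φ) := hH_le Φ (p Φ) (hp1' Φ hΦF)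
      have h1 : Φ (p Φ) < sInf (Set.range ⇑Φ) + δ := hp1 Φ
      have h2 : sInf (Set.range ⇑Φ) ≤ Λ.1 Φ := ohf_sInf_le Λ.2 Φ
      rw [abs_sub_lt_iff]
      constructor
      · rcases max_cases (Λ.1 Φ) (Hf Φ) with ⟨hcase, -⟩ | ⟨hcase, -⟩ <;> rw [hcase] <;> linarith
      · have := le_max_left (Λ.1 Φ) (Hf Φ)
        linarith
    · apply hF
      intro Φ hΦF
      show |min (Λ.1 Φ) (Kf Φ) - Λ.1 Φ| < δ
      have hK_ge_q : Φ (q Φ) ≤ Kf Φ := hK_ge Φ (q Φ) (hq0' Φ hΦF)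
      have h1 : sSup (Set.range ⇑Φ) - δ < Φ (q Φ) := hq1 Φ
      have h2 : Λ.1 Φ ≤ sSup (Set.range ⇑Φ) := ohf_le_sSup Λ.2 Φ
      rw [abs_sub_lt_iff]
      constructor
      · have := min_le_left (Λ.1 Φ) (Kf Φ)
        linarith
      · rcases min_cases (Λ.1 Φ) (Kf Φ) with ⟨hcase, -⟩ | ⟨hcase, -⟩ <;> rw [hcase] <;> linarith
  -- fiber preservation
  have hμ₁ : muOH X ∘ g₁ = muOH X := by
    funext M
    apply Subtype.ext
    funext φ
    show max (M.1 (piOH X φ)) (Hf (piOH X φ)) = M.1 (piOH X φ)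
    apply max_eq_left
    have h1 : Hf (piOH X φ) ≤ (piOH X φ) νmin := hH_le _ νmin hmin1
    have h4 : ContinuousMap.const (↥(OHF X)) (sInf (Set.range ⇑φ)) ≤ piOH X φ := by
      intro ν
      exact ohf_sInf_le ν.2 φ
    have h5 := M.2.2.2.1 _ _ h4
    rw [ohf_const M.2] at h5
    exact le_trans h1 h5
  have hμ₂ : muOH X ∘ g₂ = muOH X := by
    funext M
    apply Subtype.ext
    funext φ
    show min (M.1 (piOH X φ)) (Kf (piOH X φ)) = M.1 (piOH X φ)
    apply min_eq_left
    have h1 : (piOH X φ) νmax ≤ Kf (piOH X φ) := hK_ge _ νmax hmax0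
    have h4 : piOH X φ ≤ ContinuousMap.const (↥(OHF X)) (sSup (Set.range ⇑φ)) := by
      intro ν
      exact ohf_le_sSup ν.2 φ
    have h5 := M.2.2.2.1 _ _ h4
    rw [ohf_const M.2] at h5
    exact le_trans h5 h1
  exact ⟨g₁, g₂, hg₁c, hg₂c, hrange, hclose, hμ₁, hμ₂⟩
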